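/- arXiv:1706.00263 — 4 statements merged into one kernel-verified Lean document; each statement's English description precedes it below -/
import Mathlib

section
/- For every natural number n ≥ 2 and every real c, ∫_c^∞ (z − c) φ(z) H_n(z) dz = H_{n−2}(c) φ(c). -/
open MeasureTheory Real Set

/-- The standard normal density `φ(z) = (2π)^(−1/2) exp(−z²/2)`. -/
noncomputable def φ (z : ℝ) : ℝ := (Real.sqrt (2 * Real.pi))⁻¹ * Real.exp (-z ^ 2 / 2)

/-- The Hermite polynomials defined by `H n z * φ z = φ⁽ⁿ⁾ z`. -/
noncomputable def H (n : ℕ) (z : ℝ) : ℝ := iteratedDeriv n φ z / φ z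

open Polynomial Filter Topology

lemma φ_pos (z : ℝ) : 0 < φ z := by
  have : 0 < Real.sqrt (2 * Real.pi) := Real.sqrt_pos.2 (by positivity)
  exact mul_pos (inv_pos.2 this) (Real.exp_pos _)

lemma contDiff_gauss : ContDiff ℝ ⊤ (fun y : ℝ => Real.exp (-(y ^ 2 / 2))) :=
  Real.contDiff_exp.comp (((contDiff_id (E := ℝ)).pow 2).div_const 2).neg

lemma iteratedDeriv_mul_const (C : ℝ) (f : ℝ → ℝ) (hf : ContDiff ℝ ⊤ f) (k : ℕ) :
    iteratedDeriv k (fun z => C * f z) = fun z => C * iteratedDeriv k f z := by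
  induction k with
  | zero => simp
  | succ k ih =>
      funext z
      rw [iteratedDeriv_succ, ih, iteratedDeriv_succ]
      exact deriv_const_mul C ((hf.differentiable_iteratedDeriv k
        (Ne.lt_top (by simp))) z)

lemma φ_eq : φ = fun z => (Real.sqrt (2 * Real.pi))⁻¹ * Real.exp (-(z ^ 2 / 2)) := by
  funext z; simp [φ, neg_div]

lemma contDiff_φ : ContDiff ℝ ⊤ φ := by
  rw [φ_eq]; exact contDiff_const.mul contDiff_gauss

lemma iteratedDeriv_φ (k : ℕ) (z : ℝ) :
    iteratedDeriv k φ z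
      = (Real.sqrt (2 * Real.pi))⁻¹ * ((-1 : ℝ) ^ k * aeval z (hermite k))
        * Real.exp (-(z ^ 2 / 2)) := by
  rw [φ_eq, iteratedDeriv_mul_const _ _ contDiff_gauss]
  simp only [iteratedDeriv_eq_iterate, Polynomial.deriv_gaussian_eq_hermite_mul_gaussian]
  ring

lemma integrable_poly_gauss (P : ℝ[X]) :
    Integrable (fun z : ℝ => P.eval z * Real.exp (-(z ^ 2 / 2))) := by
  induction P using Polynomial.induction_on' with
  | add p q hp hq => simpa [add_mul, Pi.add_def] using hp.add hq
  | monomial k a =>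
      have h0 : Integrable (fun z : ℝ => z ^ k * Real.exp (-(z ^ 2 / 2))) := by
        have h := integrable_rpow_mul_exp_neg_mul_sq (b := 1/2) (by norm_num)
          (s := (k : ℝ)) (lt_of_lt_of_le neg_one_lt_zero (Nat.cast_nonneg k))
        have heq : (fun x : ℝ => x ^ (k : ℝ) * Real.exp (-(1/2) * x ^ 2))
            = fun z : ℝ => z ^ k * Real.exp (-(z ^ 2 / 2)) := by
          funext x
          rw [Real.rpow_natCast]
          ring_nf
        rwa [heq] at h
      simpa [Polynomial.eval_monomial, mul_assoc] using h0.const_mul a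

lemma tendsto_poly_gauss (P : ℝ[X]) :
    Tendsto (fun z : ℝ => P.eval z * Real.exp (-(z ^ 2 / 2))) atTop (𝓝 0) := by
  have h1 := P.tendsto_div_exp_atTop
  have h2 : Tendsto (fun z : ℝ => Real.exp (z - z ^ 2 / 2)) atTop (𝓝 0) := by
    apply Real.tendsto_exp_atBot.comp
    refine tendsto_atBot_mono' atTop ?_ tendsto_neg_atTop_atBot
    filter_upwards [eventually_ge_atTop (4 : ℝ)] with z hz
    nlinarith
  have := h1.mul h2
  rw [mul_zero] at this
  refine this.congr fun z => ?_
  rw [Real.exp_sub, Real.exp_neg]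
  field_simp

lemma hasDerivAt_iteratedDeriv_φ (k : ℕ) (x : ℝ) :
    HasDerivAt (iteratedDeriv k φ) (iteratedDeriv (k + 1) φ x) x := by
  have hd : DifferentiableAt ℝ (iteratedDeriv k φ) x :=
    (contDiff_φ.differentiable_iteratedDeriv k (Ne.lt_top (by simp))) x
  have := hd.hasDerivAt
  rwa [iteratedDeriv_succ]

/-- For `n ≥ 2` and `c ∈ ℝ`: `∫_c^∞ (z − c) φ(z) Hₙ(z) dz = H_{n−2}(c) φ(c)`. -/
theorem integral_sub_mul_hermite_Ioi (n : ℕ) (hn : 2 ≤ n) (c : ℝ) :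
    (∫ z in Set.Ioi c, (z - c) * φ z * H n z) = H (n - 2) c * φ c := by
  obtain ⟨m, rfl⟩ : ∃ m, n = m + 2 := ⟨n - 2, by omega⟩
  have hm2 : m + 2 - 2 = m := by omega
  rw [hm2]
  have hφH : ∀ k z, φ z * H k z = iteratedDeriv k φ z := fun k z => by
    rw [H, mul_div_cancel₀ _ (φ_pos z).ne']
  have hHφ : ∀ k z, H k z * φ z = iteratedDeriv k φ z := fun k z => by
    rw [mul_comm]; exact hφH k z
  -- the antiderivative
  set F : ℝ → ℝ := fun z => (z - c) * iteratedDeriv (m + 1) φ z - iteratedDeriv m φ z with hF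
  have hF' : ∀ x : ℝ, HasDerivAt F ((x - c) * iteratedDeriv (m + 2) φ x) x := by
    intro x
    have h1 := (((hasDerivAt_id x).sub_const c).mul (hasDerivAt_iteratedDeriv_φ (m + 1) x)).sub
      (hasDerivAt_iteratedDeriv_φ m x)
    refine h1.congr_deriv ?_
    rw [iteratedDeriv_succ (n := m + 1)]
    simp only [id_eq]
    ring
  -- polynomial forms
  set K : ℝ := (Real.sqrt (2 * Real.pi))⁻¹ with hK
  have hmap : ∀ (k : ℕ) (z : ℝ),
      ((hermite k).map (algebraMap ℤ ℝ)).eval z = aeval z (hermite k) := fun k z => by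
    rw [Polynomial.eval_map, Polynomial.aeval_def]
  set Q2 : ℝ[X] := Polynomial.C K * (Polynomial.X - Polynomial.C c)
      * Polynomial.C ((-1 : ℝ) ^ (m + 2)) * (hermite (m + 2)).map (algebraMap ℤ ℝ) with hQ2
  have hQ2eval : ∀ z : ℝ, (z - c) * iteratedDeriv (m + 2) φ z
      = Q2.eval z * Real.exp (-(z ^ 2 / 2)) := by
    intro z
    rw [iteratedDeriv_φ, hQ2]
    simp only [Polynomial.eval_mul, Polynomial.eval_sub, Polynomial.eval_C, Polynomial.eval_X,
      hmap]
    ring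
  set Q1 : ℝ[X] := Polynomial.C K * ((Polynomial.X - Polynomial.C c)
      * Polynomial.C ((-1 : ℝ) ^ (m + 1)) * (hermite (m + 1)).map (algebraMap ℤ ℝ)
      - Polynomial.C ((-1 : ℝ) ^ m) * (hermite m).map (algebraMap ℤ ℝ)) with hQ1
  have hQ1eval : ∀ z : ℝ, F z = Q1.eval z * Real.exp (-(z ^ 2 / 2)) := by
    intro z
    rw [hF]
    simp only [iteratedDeriv_φ, hQ1, Polynomial.eval_mul, Polynomial.eval_sub, Polynomial.eval_C,
      Polynomial.eval_X, hmap]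
    ring
  have hint : IntegrableOn (fun z => (z - c) * iteratedDeriv (m + 2) φ z) (Set.Ioi c) := by
    refine ((integrable_poly_gauss Q2).integrableOn).congr_fun ?_ measurableSet_Ioi
    intro z _; exact (hQ2eval z).symm
  have htend : Tendsto F atTop (𝓝 0) := by
    refine (tendsto_poly_gauss Q1).congr fun z => (hQ1eval z).symm
  have key := integral_Ioi_of_hasDerivAt_of_tendsto' (a := c)
    (fun x _ => hF' x) hint htend
  have : (∫ z in Set.Ioi c, (z - c) * φ z * H (m + 2) z)
      = ∫ z in Set.Ioi c, (z - c) * iteratedDeriv (m + 2) φ z := by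
    congr 1; funext z; rw [mul_assoc, hφH]
  rw [this, key, hHφ, hF]
  simp
end

section
/- (Closed-form solution of the Heston Riccati equation.) Let a, ε, λ, z, B₀ ∈ ℝ with ε ≠ 0 and a² > λ²ε²z², and set d = √(a² − λ²ε²z²), p = a + d − ε²B₀, q = a − d − ε²B₀, h₄(u) = q − p·e^{d·u}, and B(u) = B₀ + (1/ε²)·p·(1 − e^{d·u})·q / h₄(u). Then B(0) = B₀, and for every u in an interval containing 0 on which h₄ does not vanish, B is differentiable at u with B'(u) = (1/2)ε²·B(u)² − a·B(u) + (1/2)λ²z². -/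
open Real

/-- Closed-form solution of the Heston Riccati equation
`B' = (1/2)ε²B² − aB + (1/2)λ²z²` (with `a = κξ − ερλz`): the explicit function
`B(u) = B₀ + ε⁻² p (1 − e^{du}) q / h₄(u)` satisfies `B(0) = B₀` and the ODE at every
point where `h₄` does not vanish. -/
theorem heston_riccati_solution (a ε lam z B₀ : ℝ) (hε : ε ≠ 0)
    (hdisc : lam ^ 2 * ε ^ 2 * z ^ 2 < a ^ 2)
    (d p q : ℝ)
    (hd : d = Real.sqrt (a ^ 2 - lam ^ 2 * ε ^ 2 * z ^ 2))
    (hp : p = a + d - ε ^ 2 * B₀)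
    (hq : q = a - d - ε ^ 2 * B₀)
    (h₄ B : ℝ → ℝ)
    (hh₄ : ∀ u, h₄ u = q - p * Real.exp (d * u))
    (hB : ∀ u, B u = B₀ + (1 / ε ^ 2) * p * (1 - Real.exp (d * u)) * q / h₄ u) :
    B 0 = B₀ ∧
    ∀ u : ℝ, h₄ u ≠ 0 →
      HasDerivAt B (1 / 2 * ε ^ 2 * (B u) ^ 2 - a * B u + 1 / 2 * lam ^ 2 * z ^ 2) u := by
  have hd2 : d ^ 2 = a ^ 2 - lam ^ 2 * ε ^ 2 * z ^ 2 := by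
    rw [hd]; exact Real.sq_sqrt (by nlinarith)
  have hlz : 1 / 2 * lam ^ 2 * z ^ 2 = 1 / 2 * ((a ^ 2 - d ^ 2) / ε ^ 2) := by
    rw [hd2]; field_simp; ring
  constructor
  · rw [hB]; simp
  · intro u hu
    have hu' : q - p * Real.exp (d * u) ≠ 0 := by rw [← hh₄ u]; exact hu
    have hBfun : B = fun u => B₀ + 1 / ε ^ 2 * p * (1 - Real.exp (d * u)) * q /
        (q - p * Real.exp (d * u)) := by
      funext v; rw [hB v, hh₄ v]
    have hexp : HasDerivAt (fun u : ℝ => Real.exp (d * u)) (d * Real.exp (d * u)) u := by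
      simpa [mul_comm] using ((hasDerivAt_id u).const_mul d).exp
    have hnum := (((hasDerivAt_const u (1:ℝ)).sub hexp).const_mul ((1:ℝ) / ε ^ 2 * p)).mul_const q
    have hden := (hasDerivAt_const u q).sub (hexp.const_mul p)
    have hmain := (hasDerivAt_const u B₀).add (hnum.div hden hu')
    rw [hB u, hh₄ u, hlz, hBfun]
    simp only [Pi.add_def, Pi.sub_def, Pi.div_def] at hmain
    refine hmain.congr_deriv ?_
    have hE := Real.exp_ne_zero (d * u)
    field_simp
    subst hp hq
    ring
end

section
/- (Closed-form solution of the accompanying linear equation.) Let a, ε, λ, z, B₀, κ, θ ∈ ℝ with ε ≠ 0 and a² > λ²ε²z², and set d = √(a² − λ²ε²z²), p = a + d − ε²B₀, q = a − d − ε²B₀, h₄(u) = q − p·e^{d·u}, B(u) = B₀ + (1/ε²)·p·(1 − e^{d·u})·q / h₄(u), and Ã(u) = (κθ/ε²)·( (a + d)·u − 2·log( −h₄(u)/(2d) ) ). Then Ã(0) = 0, and for every u in an interval containing 0 on which −h₄(u)/(2d) > 0, Ã is differentiable at u with Ã'(u) = κθ·B(u). -/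
open Real

/-- Closed-form solution of the accompanying linear equation `Atilde' = κθB`: with the
explicit Riccati solution `B`, the function
`Atilde(u) = (κθ/ε²)((a + d)u − 2 log(−h₄(u)/(2d)))` satisfies `Atilde(0) = 0` and `Atilde' = κθB`
at every point where `−h₄(u)/(2d) > 0`. -/
theorem heston_linear_solution (a ε lam z B₀ κ θ : ℝ) (hε : ε ≠ 0)
    (hdisc : lam ^ 2 * ε ^ 2 * z ^ 2 < a ^ 2)
    (d p q : ℝ)
    (hd : d = Real.sqrt (a ^ 2 - lam ^ 2 * ε ^ 2 * z ^ 2))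
    (hp : p = a + d - ε ^ 2 * B₀)
    (hq : q = a - d - ε ^ 2 * B₀)
    (h₄ B Atilde : ℝ → ℝ)
    (hh₄ : ∀ u, h₄ u = q - p * Real.exp (d * u))
    (hB : ∀ u, B u = B₀ + (1 / ε ^ 2) * p * (1 - Real.exp (d * u)) * q / h₄ u)
    (hAtilde : ∀ u, Atilde u = κ * θ / ε ^ 2 * ((a + d) * u - 2 * Real.log (-h₄ u / (2 * d)))) :
    Atilde 0 = 0 ∧
    ∀ u : ℝ, 0 < -h₄ u / (2 * d) → HasDerivAt Atilde (κ * θ * B u) u := by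
  have hd0 : 0 < d := by
    rw [hd]; exact Real.sqrt_pos.mpr (by linarith)
  have hqp : q = p - 2 * d := by rw [hp, hq]; ring
  constructor
  · rw [hAtilde]
    have h0 : h₄ 0 = -(2 * d) := by rw [hh₄]; simp [hqp]
    rw [h0]
    have : -(-(2 * d)) / (2 * d) = 1 := by
      field_simp
    rw [this, Real.log_one]; ring
  · intro u hu
    rw [hh₄] at hu
    have hgne : -(q - p * Real.exp (d * u)) / (2 * d) ≠ 0 := ne_of_gt hu
    have hh4ne : q - p * Real.exp (d * u) ≠ 0 := by
      intro h; rw [h] at hu; simp at hu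
    have hfun : Atilde = fun v => κ * θ / ε ^ 2 *
        ((a + d) * v - 2 * Real.log (-(q - p * Real.exp (d * v)) / (2 * d))) := by
      funext v; rw [hAtilde v, hh₄ v]
    rw [hfun]
    have h1 : HasDerivAt (fun v : ℝ => d * v) d u := by
      simpa using (hasDerivAt_id u).const_mul d
    have h2 : HasDerivAt (fun v : ℝ => Real.exp (d * v)) (Real.exp (d * u) * d) u := h1.exp
    have h3 : HasDerivAt (fun v : ℝ => p * Real.exp (d * v)) (p * (Real.exp (d * u) * d)) u :=
      h2.const_mul p
    have h4 : HasDerivAt (fun v : ℝ => -(q - p * Real.exp (d * v)) / (2 * d))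
        (-(-(p * (Real.exp (d * u) * d))) / (2 * d)) u :=
      ((h3.const_sub q).neg).div_const (2 * d)
    have hlog := h4.log hgne
    have h5 : HasDerivAt (fun v : ℝ => (a + d) * v) (a + d) u := by
      simpa using (hasDerivAt_id u).const_mul (a + d)
    have h6 := (h5.sub (hlog.const_mul 2)).const_mul (κ * θ / ε ^ 2)
    refine h6.congr_deriv ?_
    rw [hB, hh₄]
    have hdne : d ≠ 0 := ne_of_gt hd0
    have hne : p * Real.exp (d * u) - q ≠ 0 := fun h => hh4ne (by linarith)
    have key : - -(p * (Real.exp (d * u) * d)) / (2 * d) /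
        (-(q - p * Real.exp (d * u)) / (2 * d)) =
        p * Real.exp (d * u) * d / (p * Real.exp (d * u) - q) := by
      rw [neg_neg, neg_sub]
      field_simp
    rw [key]
    rw [hp, hq] at hh4ne hne ⊢
    field_simp
    ring
end

section
/- (Verification of the Kolmogorov backward equation by the separable ansatz.) Let κ, θ, ξ, ε, ρ, λ, z, T ∈ ℝ and let A, B : ℝ → ℝ be differentiable with A(0) = 0, B(0) = 0, A'(τ) = κθ·B(τ) and B'(τ) = (1/2)ε²·B(τ)² + (ερλz − κξ)·B(τ) + (1/2)λ²z² for all τ. Define u(t, V, x) = exp( A(T − t) + B(T − t)·V + z·x ). Then u(T, V, x) = e^{z·x} for all V, x, and for all (t, V, x) the partial derivatives of u satisfy ∂u/∂t + (κθ − κξ·V)·∂u/∂V + (1/2)ε²·V·∂²u/∂V² + ερλ·V·∂²u/∂V∂x + (1/2)λ²·V·∂²u/∂x² = 0. -/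
/-- Verification of the Kolmogorov backward equation by the separable ansatz
`u(t, V, x) = exp(A(T − t) + B(T − t)V + zx)`, where `A, B` solve the associated
ODE system with `A(0) = B(0) = 0`: terminal condition `u(T, V, x) = e^{zx}` and
`∂u/∂t + (κθ − κξV) ∂u/∂V + (1/2)ε²V ∂²u/∂V² + ερλV ∂²u/∂V∂x + (1/2)λ²V ∂²u/∂x² = 0`. -/
theorem kolmogorov_backward_equation (κ θ ξ ε ρ lam z T : ℝ) (A B : ℝ → ℝ)
    (hA : Differentiable ℝ A) (hB : Differentiable ℝ B)
    (hA0 : A 0 = 0) (hB0 : B 0 = 0)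
    (hA' : ∀ τ, deriv A τ = κ * θ * B τ)
    (hB' : ∀ τ, deriv B τ =
      1 / 2 * ε ^ 2 * (B τ) ^ 2 + (ε * ρ * lam * z - κ * ξ) * B τ + 1 / 2 * lam ^ 2 * z ^ 2)
    (u : ℝ → ℝ → ℝ → ℝ)
    (hu : ∀ t V x, u t V x = Real.exp (A (T - t) + B (T - t) * V + z * x)) :
    (∀ V x : ℝ, u T V x = Real.exp (z * x)) ∧
    ∀ t V x : ℝ,
      deriv (fun s => u s V x) t
      + (κ * θ - κ * ξ * V) * deriv (fun w => u t w x) V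
      + 1 / 2 * ε ^ 2 * V * deriv (fun w => deriv (fun w' => u t w' x) w) V
      + ε * ρ * lam * V * deriv (fun w => deriv (fun y => u t w y) x) V
      + 1 / 2 * lam ^ 2 * V * deriv (fun y => deriv (fun y' => u t V y') y) x = 0 := by
  constructor
  · intro V x
    rw [hu]
    simp [hA0, hB0]
  · intro t V x
    simp only [hu]
    set a := A (T - t) with ha
    set b := B (T - t) with hb
    -- time derivative
    have hAt : HasDerivAt (fun s : ℝ => A (T - s)) (deriv A (T - t) * (-1)) t :=
      (hA (T - t)).hasDerivAt.comp t ((hasDerivAt_id t).const_sub T)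
    have hBt : HasDerivAt (fun s : ℝ => B (T - s)) (deriv B (T - t) * (-1)) t :=
      (hB (T - t)).hasDerivAt.comp t ((hasDerivAt_id t).const_sub T)
    have ht : HasDerivAt (fun s => Real.exp (A (T - s) + B (T - s) * V + z * x))
        (Real.exp (a + b * V + z * x) * (deriv A (T - t) * (-1) + deriv B (T - t) * (-1) * V))
        t := by
      have := ((hAt.add (hBt.mul_const V)).add_const (z * x)).exp
      simpa [ha, hb] using this
    -- V derivative
    have hV : ∀ w : ℝ, HasDerivAt (fun w : ℝ => Real.exp (a + b * w + z * x))
        (Real.exp (a + b * w + z * x) * b) w := by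
      intro w
      have h1 : HasDerivAt (fun w : ℝ => a + b * w + z * x) b w := by
        simpa using (((hasDerivAt_id w).const_mul b).const_add a).add_const (z * x)
      simpa using h1.exp
    have hVd : (deriv fun w : ℝ => Real.exp (a + b * w + z * x))
        = fun w : ℝ => Real.exp (a + b * w + z * x) * b := funext fun w => (hV w).deriv
    have hVV : HasDerivAt (fun w : ℝ => Real.exp (a + b * w + z * x) * b)
        (Real.exp (a + b * V + z * x) * b * b) V := (hV V).mul_const b
    -- x derivative (for each w)
    have hx : ∀ w y : ℝ, HasDerivAt (fun y : ℝ => Real.exp (a + b * w + z * y))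
        (Real.exp (a + b * w + z * y) * z) y := by
      intro w y
      have h1 : HasDerivAt (fun y : ℝ => a + b * w + z * y) z y := by
        simpa using ((hasDerivAt_id y).const_mul z).const_add (a + b * w)
      simpa [add_assoc] using h1.exp
    have hxd : (fun w : ℝ => deriv (fun y : ℝ => Real.exp (a + b * w + z * y)) x)
        = fun w : ℝ => Real.exp (a + b * w + z * x) * z := funext fun w => (hx w x).deriv
    have hVx : HasDerivAt (fun w : ℝ => Real.exp (a + b * w + z * x) * z)
        (Real.exp (a + b * V + z * x) * b * z) V := (hV V).mul_const z
    have hxd2 : (deriv fun y : ℝ => Real.exp (a + b * V + z * y))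
        = fun y : ℝ => Real.exp (a + b * V + z * y) * z := funext fun y => (hx V y).deriv
    have hxx : HasDerivAt (fun y : ℝ => Real.exp (a + b * V + z * y) * z)
        (Real.exp (a + b * V + z * x) * z * z) x := (hx V x).mul_const z
    rw [ht.deriv, (hV V).deriv, hVd, hVV.deriv, hxd, hVx.deriv, hxd2, hxx.deriv,
      hA', hB']
    ring
end
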